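/- Let M and M̃ be complex-valued continuous kernels on the triangle {(x,t) : 0 ≤ t ≤ x ≤ π}. For λ ∈ ℂ, let ψ(·,λ) be the solution of the adjoint equation −i·ψ'(x) + ∫ₓ^π M(t,x)·ψ(t) dt = λ·ψ(x) with ψ(π,λ) = 1, and let ẽ(·,λ) be the solution of i·ẽ'(x) + ∫₀ˣ M̃(x,t)·ẽ(t) dt = λ·ẽ(x) with ẽ(0,λ) = 1. If e(π,λ) = ẽ(π,λ) for all λ ∈ ℂ, where e(·,λ) is the solution of equation (1) with kernel M and e(0,λ) = 1, then ∫₀^π ψ(x,λ) · (∫₀ˣ (M(x,t) − M̃(x,t))·ẽ(t,λ) dt) dx = 0 for all λ ∈ ℂ. -/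

import Mathlib

open Complex MeasureTheory Set Real

/-- The triangle `{(x,t) : 0 ≤ t ≤ x ≤ π}`. -/
def Triangle : Set (ℝ × ℝ) := {p | 0 ≤ p.2 ∧ p.2 ≤ p.1 ∧ p.1 ≤ Real.pi}

lemma triangle_isClosed : IsClosed Triangle := by
  have h : Triangle = {p : ℝ × ℝ | 0 ≤ p.2} ∩ ({p | p.2 ≤ p.1} ∩ {p | p.1 ≤ Real.pi}) := rfl
  rw [h]
  exact (isClosed_le continuous_const continuous_snd).inter
    ((isClosed_le continuous_snd continuous_fst).inter
      (isClosed_le continuous_fst continuous_const))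

lemma tietze_of_closed {X : Type*} [TopologicalSpace X] [NormalSpace X] {s : Set X}
    (hs : IsClosed s) {f : X → ℂ} (hf : ContinuousOn f s) :
    ∃ g : X → ℂ, Continuous g ∧ EqOn g f s := by
  obtain ⟨g, hg⟩ := ContinuousMap.exists_restrict_eq (s := s) hs ⟨s.restrict f, hf.restrict⟩
  refine ⟨g, g.continuous, fun x hx => ?_⟩
  have := congrFun (congrArg ContinuousMap.toFun hg) ⟨x, hx⟩
  exact this

lemma icongr {a b : ℝ} (hab : a ≤ b) {f g : ℝ → ℂ} (h : ∀ x ∈ Icc a b, f x = g x) :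
    ∫ x in a..b, f x = ∫ x in a..b, g x :=
  intervalIntegral.integral_congr (by rwa [uIcc_of_le hab])

lemma ii_of_eqOn {g G : ℝ → ℂ} (hG : Continuous G) (h : EqOn g G (Icc 0 Real.pi)) :
    IntervalIntegrable g volume 0 Real.pi := by
  rw [intervalIntegrable_iff_integrableOn_Icc_of_le pi_pos.le]
  exact (hG.integrableOn_Icc).congr_fun h.symm measurableSet_Icc

lemma ibp_pi (u v u' v' : ℝ → ℂ)
    (hu : ∀ x ∈ Icc (0:ℝ) Real.pi, HasDerivWithinAt u (u' x) (Icc 0 Real.pi) x)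
    (hv : ∀ x ∈ Icc (0:ℝ) Real.pi, HasDerivWithinAt v (v' x) (Icc 0 Real.pi) x)
    (hint : IntervalIntegrable (fun x => u' x * v x + u x * v' x) volume 0 Real.pi) :
    ∫ x in (0:ℝ)..Real.pi, (u' x * v x + u x * v' x)
      = u Real.pi * v Real.pi - u 0 * v 0 := by
  apply intervalIntegral.integral_eq_sub_of_hasDeriv_right_of_le (f := fun x => u x * v x)
    (f' := fun x => u' x * v x + u x * v' x) pi_pos.le
  · have cu : ContinuousOn u (Icc 0 Real.pi) := fun x hx => (hu x hx).continuousWithinAt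
    have cv : ContinuousOn v (Icc 0 Real.pi) := fun x hx => (hv x hx).continuousWithinAt
    exact cu.mul cv
  · intro x hx
    have hnx : Icc (0:ℝ) Real.pi ∈ nhds x := Icc_mem_nhds hx.1 hx.2
    exact (((hu x (Ioo_subset_Icc_self hx)).hasDerivAt hnx).mul
      ((hv x (Ioo_subset_Icc_self hx)).hasDerivAt hnx)).hasDerivWithinAt
  · exact hint

lemma fubini_triangle (H : ℝ × ℝ → ℂ) (hH : Continuous H) :
    (∫ x in (0:ℝ)..Real.pi, ∫ t in (0:ℝ)..x, H (x, t))
      = ∫ t in (0:ℝ)..Real.pi, ∫ x in t..Real.pi, H (x, t) := by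
  set μ : Measure ℝ := volume.restrict (Icc (0:ℝ) Real.pi) with hμ
  set S : Set (ℝ × ℝ) := {p | p.2 ≤ p.1} with hS
  have hSm : MeasurableSet S := (isClosed_le continuous_snd continuous_fst).measurableSet
  set F : ℝ × ℝ → ℂ := S.indicator H with hF
  have hFi : Integrable F (μ.prod μ) := by
    rw [hμ, Measure.prod_restrict, ← Measure.volume_eq_prod]
    exact (hH.continuousOn.integrableOn_compact (isCompact_Icc.prod isCompact_Icc)).indicator hSm
  have swap : (∫ x, ∫ t, F (x, t) ∂μ ∂μ) = ∫ t, ∫ x, F (x, t) ∂μ ∂μ :=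
    MeasureTheory.integral_integral_swap hFi
  have L : (∫ x, (∫ t, F (x, t) ∂μ) ∂μ)
      = ∫ x in (0:ℝ)..Real.pi, ∫ t in (0:ℝ)..x, H (x, t) := by
    rw [intervalIntegral.integral_of_le pi_pos.le, ← integral_Icc_eq_integral_Ioc]
    apply setIntegral_congr_fun measurableSet_Icc
    intro x hx
    dsimp only
    have h1 : (fun t => F (x, t)) = (Iic x).indicator (fun t => H (x, t)) := by
      funext t
      by_cases h : t ≤ x <;> simp [hF, hS, Set.indicator_apply, h]
    rw [h1, integral_indicator measurableSet_Iic, hμ,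
      Measure.restrict_restrict measurableSet_Iic]
    have h2 : Iic x ∩ Icc (0:ℝ) Real.pi = Icc 0 x := by
      ext t
      simp only [mem_inter_iff, mem_Iic, mem_Icc]
      exact ⟨fun h => ⟨h.2.1, h.1⟩, fun h => ⟨h.2, h.1, h.2.trans hx.2⟩⟩
    rw [h2, integral_Icc_eq_integral_Ioc, ← intervalIntegral.integral_of_le hx.1]
  have R : (∫ t, (∫ x, F (x, t) ∂μ) ∂μ)
      = ∫ t in (0:ℝ)..Real.pi, ∫ x in t..Real.pi, H (x, t) := by
    rw [intervalIntegral.integral_of_le pi_pos.le, ← integral_Icc_eq_integral_Ioc]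
    apply setIntegral_congr_fun measurableSet_Icc
    intro t ht
    dsimp only
    have h1 : (fun x => F (x, t)) = (Ici t).indicator (fun x => H (x, t)) := by
      funext x
      by_cases h : t ≤ x <;> simp [hF, hS, Set.indicator_apply, h]
    rw [h1, integral_indicator measurableSet_Ici, hμ,
      Measure.restrict_restrict measurableSet_Ici]
    have h2 : Ici t ∩ Icc (0:ℝ) Real.pi = Icc t Real.pi := by
      ext x
      simp only [mem_inter_iff, mem_Ici, mem_Icc]
      exact ⟨fun h => ⟨h.1, h.2.2⟩, fun h => ⟨h.1, ht.1.trans h.1, h.2⟩⟩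
    rw [h2, integral_Icc_eq_integral_Ioc, ← intervalIntegral.integral_of_le ht.2]
  rw [← L, swap, R]

/-- If the characteristic functions coincide, `e(π,λ) = ẽ(π,λ)` for all `λ`, then
`∫₀^π ψ(x,λ) ∫₀ˣ (M(x,t) − M̃(x,t)) ẽ(t,λ) dt dx = 0` for all `λ`, where `ψ(·,λ)`
solves the adjoint equation (13) with kernel `M`, `ψ(π,λ) = 1`, and `ẽ(·,λ)` solves
equation (1) with kernel `M̃`, `ẽ(0,λ) = 1`. -/
theorem stmt_17 (M Mt : ℝ → ℝ → ℂ)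
    (hM : ContinuousOn (fun p : ℝ × ℝ => M p.1 p.2) Triangle)
    (hMt : ContinuousOn (fun p : ℝ × ℝ => Mt p.1 p.2) Triangle)
    (ψ : ℂ → ℝ → ℂ) (e et : ℝ → ℂ → ℂ)
    (hψ : ∀ lam : ℂ, ∃ ψ' : ℝ → ℂ,
      (∀ x ∈ Icc (0:ℝ) Real.pi,
        HasDerivWithinAt (ψ lam) (ψ' x) (Icc 0 Real.pi) x ∧
        -(Complex.I * ψ' x) + (∫ t in x..Real.pi, M t x * ψ lam t)
          = lam * ψ lam x) ∧
      ψ lam Real.pi = 1)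
    (he : ∀ lam : ℂ, ∃ e' : ℝ → ℂ,
      (∀ x ∈ Icc (0:ℝ) Real.pi,
        HasDerivWithinAt (fun x => e x lam) (e' x) (Icc 0 Real.pi) x ∧
        Complex.I * e' x + (∫ t in (0:ℝ)..x, M x t * e t lam) = lam * e x lam) ∧
      e 0 lam = 1)
    (het : ∀ lam : ℂ, ∃ et' : ℝ → ℂ,
      (∀ x ∈ Icc (0:ℝ) Real.pi,
        HasDerivWithinAt (fun x => et x lam) (et' x) (Icc 0 Real.pi) x ∧
        Complex.I * et' x + (∫ t in (0:ℝ)..x, Mt x t * et t lam) = lam * et x lam) ∧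
      et 0 lam = 1)
    (hchar : ∀ lam : ℂ, e Real.pi lam = et Real.pi lam) :
    ∀ lam : ℂ,
      (∫ x in (0:ℝ)..Real.pi,
        ψ lam x * ∫ t in (0:ℝ)..x, (M x t - Mt x t) * et t lam) = 0 := by
  intro lam
  obtain ⟨p, hp, hψπ⟩ := hψ lam
  obtain ⟨q, hq, he0⟩ := he lam
  obtain ⟨r, hr, het0⟩ := het lam
  -- continuity of the solutions
  have cψ : ContinuousOn (ψ lam) (Icc 0 Real.pi) :=
    fun x hx => ((hp x hx).1).continuousWithinAt
  have cu : ContinuousOn (fun x => e x lam) (Icc 0 Real.pi) :=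
    fun x hx => ((hq x hx).1).continuousWithinAt
  have cw : ContinuousOn (fun x => et x lam) (Icc 0 Real.pi) :=
    fun x hx => ((hr x hx).1).continuousWithinAt
  -- projections map the triangle into `Icc 0 π`
  have pr1 : ∀ pr : ℝ × ℝ, pr ∈ Triangle → pr.1 ∈ Icc (0:ℝ) Real.pi :=
    fun pr hpr => ⟨le_trans hpr.1 hpr.2.1, hpr.2.2⟩
  have pr2 : ∀ pr : ℝ × ℝ, pr ∈ Triangle → pr.2 ∈ Icc (0:ℝ) Real.pi :=
    fun pr hpr => ⟨hpr.1, le_trans hpr.2.1 hpr.2.2⟩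
  -- continuous extensions
  obtain ⟨Psi, cPsi, ePsi⟩ := tietze_of_closed isClosed_Icc cψ
  obtain ⟨U, cU, eU⟩ := tietze_of_closed isClosed_Icc cu
  obtain ⟨W, cW, eW⟩ := tietze_of_closed isClosed_Icc cw
  obtain ⟨GA, cGA, eGA⟩ := tietze_of_closed triangle_isClosed
    (f := fun pr : ℝ × ℝ => M pr.1 pr.2 * ψ lam pr.1)
    (hM.mul (cψ.comp continuous_fst.continuousOn pr1))
  obtain ⟨GB, cGB, eGB⟩ := tietze_of_closed triangle_isClosed
    (f := fun pr : ℝ × ℝ => M pr.1 pr.2 * et pr.2 lam)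
    (hM.mul (cw.comp continuous_snd.continuousOn pr2))
  obtain ⟨GC, cGC, eGC⟩ := tietze_of_closed triangle_isClosed
    (f := fun pr : ℝ × ℝ => Mt pr.1 pr.2 * et pr.2 lam)
    (hMt.mul (cw.comp continuous_snd.continuousOn pr2))
  obtain ⟨GD, cGD, eGD⟩ := tietze_of_closed triangle_isClosed
    (f := fun pr : ℝ × ℝ => M pr.1 pr.2 * e pr.2 lam)
    (hM.mul (cu.comp continuous_snd.continuousOn pr2))
  -- continuity of parametric integrals
  have cJA : Continuous fun y : ℝ => ∫ t in y..Real.pi, GA (t, y) := by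
    have c1 : Continuous fun y : ℝ => ∫ t in Real.pi..y, GA (t, y) :=
      intervalIntegral.continuous_parametric_intervalIntegral_of_continuous
        (f := fun y t => GA (t, y)) (by exact cGA.comp continuous_swap) continuous_id
    have h2 : (fun y : ℝ => ∫ t in y..Real.pi, GA (t, y))
        = fun y : ℝ => -∫ t in Real.pi..y, GA (t, y) := by
      funext y; rw [intervalIntegral.integral_symm]
    rw [h2]; exact c1.neg
  have cKB : Continuous fun x : ℝ => ∫ t in (0:ℝ)..x, GB (x, t) :=
    intervalIntegral.continuous_parametric_intervalIntegral_of_continuous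
      (f := fun x t => GB (x, t)) (by exact cGB) continuous_id
  have cKC : Continuous fun x : ℝ => ∫ t in (0:ℝ)..x, GC (x, t) :=
    intervalIntegral.continuous_parametric_intervalIntegral_of_continuous
      (f := fun x t => GC (x, t)) (by exact cGC) continuous_id
  have cKD : Continuous fun x : ℝ => ∫ t in (0:ℝ)..x, GD (x, t) :=
    intervalIntegral.continuous_parametric_intervalIntegral_of_continuous
      (f := fun x t => GD (x, t)) (by exact cGD) continuous_id
  -- identification of the integrals with their continuous representatives on `Icc 0 π`
  have eqJ : ∀ x ∈ Icc (0:ℝ) Real.pi,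
      (∫ s in x..Real.pi, M s x * ψ lam s) = ∫ t in x..Real.pi, GA (t, x) := by
    intro x hx
    exact icongr hx.2 (fun t ht => (eGA (show ((t, x) : ℝ × ℝ) ∈ Triangle from ⟨hx.1, ht.1, ht.2⟩)).symm)
  have eqK : ∀ x ∈ Icc (0:ℝ) Real.pi,
      (∫ t in (0:ℝ)..x, M x t * et t lam) = ∫ t in (0:ℝ)..x, GB (x, t) := by
    intro x hx
    exact icongr hx.1 (fun t ht => (eGB (show ((x, t) : ℝ × ℝ) ∈ Triangle from ⟨ht.1, ht.2, hx.2⟩)).symm)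
  have eqKt : ∀ x ∈ Icc (0:ℝ) Real.pi,
      (∫ t in (0:ℝ)..x, Mt x t * et t lam) = ∫ t in (0:ℝ)..x, GC (x, t) := by
    intro x hx
    exact icongr hx.1 (fun t ht => (eGC (show ((x, t) : ℝ × ℝ) ∈ Triangle from ⟨ht.1, ht.2, hx.2⟩)).symm)
  have eqKe : ∀ x ∈ Icc (0:ℝ) Real.pi,
      (∫ t in (0:ℝ)..x, M x t * e t lam) = ∫ t in (0:ℝ)..x, GD (x, t) := by
    intro x hx
    exact icongr hx.1 (fun t ht => (eGD (show ((x, t) : ℝ × ℝ) ∈ Triangle from ⟨ht.1, ht.2, hx.2⟩)).symm)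
  -- expressions for the derivatives
  have pP : ∀ x ∈ Icc (0:ℝ) Real.pi,
      p x = -Complex.I * ((∫ t in x..Real.pi, GA (t, x)) - lam * Psi x) := by
    intro x hx
    have h := (hp x hx).2
    rw [← eqJ x hx, ePsi hx]
    linear_combination Complex.I * h + p x * Complex.I_mul_I
  have rR : ∀ x ∈ Icc (0:ℝ) Real.pi,
      r x = -Complex.I * (lam * W x - ∫ t in (0:ℝ)..x, GC (x, t)) := by
    intro x hx
    have h := (hr x hx).2
    rw [← eqKt x hx, eW hx]
    linear_combination -Complex.I * h + r x * Complex.I_mul_I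
  have qQ : ∀ x ∈ Icc (0:ℝ) Real.pi,
      q x = -Complex.I * (lam * U x - ∫ t in (0:ℝ)..x, GD (x, t)) := by
    intro x hx
    have h := (hq x hx).2
    rw [← eqKe x hx, eU hx]
    linear_combination -Complex.I * h + q x * Complex.I_mul_I
  -- interval integrability of all relevant products on [0, π]
  have cPP : Continuous fun x : ℝ =>
      -Complex.I * ((∫ t in x..Real.pi, GA (t, x)) - lam * Psi x) :=
    continuous_const.mul (cJA.sub (continuous_const.mul cPsi))
  have cRR : Continuous fun x : ℝ =>
      -Complex.I * (lam * W x - ∫ t in (0:ℝ)..x, GC (x, t)) :=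
    continuous_const.mul ((continuous_const.mul cW).sub cKC)
  have cQQ : Continuous fun x : ℝ =>
      -Complex.I * (lam * U x - ∫ t in (0:ℝ)..x, GD (x, t)) :=
    continuous_const.mul ((continuous_const.mul cU).sub cKD)
  have iipw : IntervalIntegrable (fun x => p x * et x lam) volume 0 Real.pi :=
    ii_of_eqOn (cPP.mul cW) (fun x hx => by rw [Pi.mul_apply, pP x hx, eW hx])
  have iiψr : IntervalIntegrable (fun x => ψ lam x * r x) volume 0 Real.pi :=
    ii_of_eqOn (cPsi.mul cRR) (fun x hx => by rw [Pi.mul_apply, rR x hx, ePsi hx])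
  have iipu : IntervalIntegrable (fun x => p x * e x lam) volume 0 Real.pi :=
    ii_of_eqOn (cPP.mul cU) (fun x hx => by rw [Pi.mul_apply, pP x hx, eU hx])
  have iiψq : IntervalIntegrable (fun x => ψ lam x * q x) volume 0 Real.pi :=
    ii_of_eqOn (cPsi.mul cQQ) (fun x hx => by rw [Pi.mul_apply, qQ x hx, ePsi hx])
  have iiψw : IntervalIntegrable (fun x => ψ lam x * et x lam) volume 0 Real.pi :=
    ii_of_eqOn (cPsi.mul cW) (fun x hx => by rw [Pi.mul_apply, ePsi hx, eW hx])
  have iiψu : IntervalIntegrable (fun x => ψ lam x * e x lam) volume 0 Real.pi :=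
    ii_of_eqOn (cPsi.mul cU) (fun x hx => by rw [Pi.mul_apply, ePsi hx, eU hx])
  have iiψK : IntervalIntegrable
      (fun x => ψ lam x * ∫ t in (0:ℝ)..x, M x t * et t lam) volume 0 Real.pi :=
    ii_of_eqOn (cPsi.mul cKB) (fun x hx => by rw [Pi.mul_apply, ePsi hx, eqK x hx])
  have iiψKt : IntervalIntegrable
      (fun x => ψ lam x * ∫ t in (0:ℝ)..x, Mt x t * et t lam) volume 0 Real.pi :=
    ii_of_eqOn (cPsi.mul cKC) (fun x hx => by rw [Pi.mul_apply, ePsi hx, eqKt x hx])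
  -- integrability of slices
  have sliceM : ∀ x ∈ Icc (0:ℝ) Real.pi,
      IntervalIntegrable (fun t => M x t * et t lam) volume 0 x := by
    intro x hx
    rw [intervalIntegrable_iff_integrableOn_Icc_of_le hx.1]
    exact ((cGB.comp (Continuous.prodMk_right x)).integrableOn_Icc).congr_fun
      (fun t ht => eGB ⟨ht.1, ht.2, hx.2⟩) measurableSet_Icc
  have sliceMt : ∀ x ∈ Icc (0:ℝ) Real.pi,
      IntervalIntegrable (fun t => Mt x t * et t lam) volume 0 x := by
    intro x hx
    rw [intervalIntegrable_iff_integrableOn_Icc_of_le hx.1]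
    exact ((cGC.comp (Continuous.prodMk_right x)).integrableOn_Icc).congr_fun
      (fun t ht => eGC ⟨ht.1, ht.2, hx.2⟩) measurableSet_Icc
  -- integration by parts identities
  have H1 : (∫ x in (0:ℝ)..Real.pi, p x * et x lam)
        + (∫ x in (0:ℝ)..Real.pi, ψ lam x * r x)
      = ψ lam Real.pi * et Real.pi lam - ψ lam 0 * et 0 lam := by
    have h := ibp_pi (ψ lam) (fun x => et x lam) p r
      (fun x hx => (hp x hx).1) (fun x hx => (hr x hx).1) (iipw.add iiψr)
    rwa [intervalIntegral.integral_add iipw iiψr] at h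
  have H2 : (∫ x in (0:ℝ)..Real.pi, p x * e x lam)
        + (∫ x in (0:ℝ)..Real.pi, ψ lam x * q x)
      = ψ lam Real.pi * e Real.pi lam - ψ lam 0 * e 0 lam := by
    have h := ibp_pi (ψ lam) (fun x => e x lam) p q
      (fun x hx => (hp x hx).1) (fun x hx => (hq x hx).1) (iipu.add iiψq)
    rwa [intervalIntegral.integral_add iipu iiψq] at h
  -- Fubini identities
  have fub : ∀ N : ℝ → ℝ → ℂ, ∀ v : ℝ → ℂ, ∀ GN : ℝ × ℝ → ℂ, Continuous GN →
      (EqOn GN (fun pr : ℝ × ℝ => N pr.1 pr.2 * v pr.2) Triangle) →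
      ContinuousOn v (Icc 0 Real.pi) →
      (∫ x in (0:ℝ)..Real.pi, ψ lam x * ∫ t in (0:ℝ)..x, N x t * v t)
        = ∫ t in (0:ℝ)..Real.pi, (∫ x in t..Real.pi, N x t * ψ lam x) * v t := by
    intro N v GN cGN eGN' cv
    have h0 := fubini_triangle (fun pr => Psi pr.1 * GN pr)
      ((cPsi.comp continuous_fst).mul cGN)
    calc (∫ x in (0:ℝ)..Real.pi, ψ lam x * ∫ t in (0:ℝ)..x, N x t * v t)
        = ∫ x in (0:ℝ)..Real.pi, ∫ t in (0:ℝ)..x, Psi x * GN (x, t) := by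
          apply icongr pi_pos.le
          intro x hx
          have h1 : (∫ t in (0:ℝ)..x, Psi x * GN (x, t))
              = Psi x * ∫ t in (0:ℝ)..x, GN (x, t) :=
            intervalIntegral.integral_const_mul _ _
          rw [h1, ← ePsi hx]
          congr 1
          exact icongr hx.1 (fun t ht => (eGN' (show ((x, t) : ℝ × ℝ) ∈ Triangle from ⟨ht.1, ht.2, hx.2⟩)).symm)
      _ = ∫ t in (0:ℝ)..Real.pi, ∫ x in t..Real.pi, Psi x * GN (x, t) := h0
      _ = ∫ t in (0:ℝ)..Real.pi, (∫ x in t..Real.pi, N x t * ψ lam x) * v t := by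
          apply icongr pi_pos.le
          intro t ht
          have h1 : (∫ x in t..Real.pi, (N x t * ψ lam x) * v t)
              = (∫ x in t..Real.pi, N x t * ψ lam x) * v t :=
            intervalIntegral.integral_mul_const _ _
          rw [← h1]
          apply icongr ht.2
          intro x hx
          rw [ePsi ⟨le_trans ht.1 hx.1, hx.2⟩, eGN' (show ((x, t) : ℝ × ℝ) ∈ Triangle from ⟨ht.1, hx.1, hx.2⟩)]
          ring
  have fub1 := fub M (fun t => et t lam) GB cGB eGB cw
  have fub2 := fub M (fun t => e t lam) GD cGD eGD cu
  -- turning the Fubini right-hand sides into linear combinations, via the adjoint equation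
  have adj : ∀ v : ℝ → ℂ,
      IntervalIntegrable (fun x => ψ lam x * v x) volume 0 Real.pi →
      IntervalIntegrable (fun x => p x * v x) volume 0 Real.pi →
      (∫ t in (0:ℝ)..Real.pi, (∫ x in t..Real.pi, M x t * ψ lam x) * v t)
        = lam * (∫ x in (0:ℝ)..Real.pi, ψ lam x * v x)
          + Complex.I * ∫ x in (0:ℝ)..Real.pi, p x * v x := by
    intro v hv1 hv2
    calc (∫ t in (0:ℝ)..Real.pi, (∫ x in t..Real.pi, M x t * ψ lam x) * v t)
        = ∫ t in (0:ℝ)..Real.pi,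
            (lam * (ψ lam t * v t) + Complex.I * (p t * v t)) := by
          apply icongr pi_pos.le
          intro t ht
          have h := (hp t ht).2
          linear_combination v t * h
      _ = lam * (∫ x in (0:ℝ)..Real.pi, ψ lam x * v x)
          + Complex.I * ∫ x in (0:ℝ)..Real.pi, p x * v x := by
          rw [intervalIntegral.integral_add (hv1.const_mul lam) (hv2.const_mul Complex.I),
            intervalIntegral.integral_const_mul, intervalIntegral.integral_const_mul]
  have H3 : (∫ x in (0:ℝ)..Real.pi, ψ lam x * ∫ t in (0:ℝ)..x, M x t * et t lam)
      = lam * (∫ x in (0:ℝ)..Real.pi, ψ lam x * et x lam)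
        + Complex.I * ∫ x in (0:ℝ)..Real.pi, p x * et x lam :=
    fub1.trans (adj (fun t => et t lam) iiψw iipw)
  have H4 : (∫ x in (0:ℝ)..Real.pi, ψ lam x * ∫ t in (0:ℝ)..x, M x t * e t lam)
      = lam * (∫ x in (0:ℝ)..Real.pi, ψ lam x * e x lam)
        + Complex.I * ∫ x in (0:ℝ)..Real.pi, p x * e x lam :=
    fub2.trans (adj (fun t => e t lam) iiψu iipu)
  -- pointwise use of the direct equations
  have H5 : (∫ x in (0:ℝ)..Real.pi, ψ lam x * ∫ t in (0:ℝ)..x, Mt x t * et t lam)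
      = lam * (∫ x in (0:ℝ)..Real.pi, ψ lam x * et x lam)
        - Complex.I * ∫ x in (0:ℝ)..Real.pi, ψ lam x * r x := by
    calc (∫ x in (0:ℝ)..Real.pi, ψ lam x * ∫ t in (0:ℝ)..x, Mt x t * et t lam)
        = ∫ x in (0:ℝ)..Real.pi,
            (lam * (ψ lam x * et x lam) - Complex.I * (ψ lam x * r x)) := by
          apply icongr pi_pos.le
          intro x hx
          have h := (hr x hx).2
          linear_combination ψ lam x * h
      _ = lam * (∫ x in (0:ℝ)..Real.pi, ψ lam x * et x lam)
          - Complex.I * ∫ x in (0:ℝ)..Real.pi, ψ lam x * r x := by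
          rw [intervalIntegral.integral_sub (iiψw.const_mul lam) (iiψr.const_mul Complex.I),
            intervalIntegral.integral_const_mul, intervalIntegral.integral_const_mul]
  have H6 : (∫ x in (0:ℝ)..Real.pi, ψ lam x * ∫ t in (0:ℝ)..x, M x t * e t lam)
      = lam * (∫ x in (0:ℝ)..Real.pi, ψ lam x * e x lam)
        - Complex.I * ∫ x in (0:ℝ)..Real.pi, ψ lam x * q x := by
    calc (∫ x in (0:ℝ)..Real.pi, ψ lam x * ∫ t in (0:ℝ)..x, M x t * e t lam)
        = ∫ x in (0:ℝ)..Real.pi,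
            (lam * (ψ lam x * e x lam) - Complex.I * (ψ lam x * q x)) := by
          apply icongr pi_pos.le
          intro x hx
          have h := (hq x hx).2
          linear_combination ψ lam x * h
      _ = lam * (∫ x in (0:ℝ)..Real.pi, ψ lam x * e x lam)
          - Complex.I * ∫ x in (0:ℝ)..Real.pi, ψ lam x * q x := by
          rw [intervalIntegral.integral_sub (iiψu.const_mul lam) (iiψq.const_mul Complex.I),
            intervalIntegral.integral_const_mul, intervalIntegral.integral_const_mul]
  -- splitting the goal integrand
  have H7 : (∫ x in (0:ℝ)..Real.pi,
        ψ lam x * ∫ t in (0:ℝ)..x, (M x t - Mt x t) * et t lam)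
      = (∫ x in (0:ℝ)..Real.pi, ψ lam x * ∫ t in (0:ℝ)..x, M x t * et t lam)
        - ∫ x in (0:ℝ)..Real.pi, ψ lam x * ∫ t in (0:ℝ)..x, Mt x t * et t lam := by
    rw [← intervalIntegral.integral_sub iiψK iiψKt]
    apply icongr pi_pos.le
    intro x hx
    have h1 : (∫ t in (0:ℝ)..x, (M x t - Mt x t) * et t lam)
        = (∫ t in (0:ℝ)..x, M x t * et t lam) - ∫ t in (0:ℝ)..x, Mt x t * et t lam := by
      rw [← intervalIntegral.integral_sub (sliceM x hx) (sliceMt x hx)]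
      apply icongr hx.1
      intro t _
      ring
    rw [h1]
    ring
  -- final algebra
  have key : (∫ x in (0:ℝ)..Real.pi, p x * e x lam)
      + (∫ x in (0:ℝ)..Real.pi, ψ lam x * q x) = 0 := by
    have h46 : Complex.I * ((∫ x in (0:ℝ)..Real.pi, p x * e x lam)
        + ∫ x in (0:ℝ)..Real.pi, ψ lam x * q x) = 0 := by
      linear_combination H6 - H4
    exact (mul_eq_zero.mp h46).resolve_left Complex.I_ne_zero
  have hψ0 : ψ lam 0 = e Real.pi lam := by
    have h := H2
    rw [key, hψπ, he0] at h
    linear_combination h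
  rw [H7, H3, H5]
  rw [hψπ, het0] at H1
  have hwu : e Real.pi lam = et Real.pi lam := hchar lam
  linear_combination Complex.I * H1 - Complex.I * hψ0 - Complex.I * hwu
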